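/- With P(1) = p and P(n+1) = (pq)^n C_{n−1} for n ≥ 1 (p + q = 1, 0 < q < 1/2), the expectation ∑_{n≥1} n·P(n) equals (p − q + pq)/(p − q). -/

import Mathlib

open Finset

noncomputable def lsmCycleProb (p q : ℝ) (n : ℕ) : ℝ :=
  if n = 1 then p else (p * q) ^ (n - 1) * (catalan (n - 2) : ℝ)

/-- Real-valued Catalan recurrence: `(m+2) C_{m+1} = (4m+2) C_m`. -/
lemma catalan_succ_real (m : ℕ) :
    ((m : ℝ) + 2) * (catalan (m + 1) : ℝ) = (4 * m + 2) * (catalan m : ℝ) := by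
  have h1 : ((m + 1) + 1) * catalan (m + 1) = Nat.centralBinom (m + 1) :=
    succ_mul_catalan_eq_centralBinom (m + 1)
  have h2 : (m + 1) * Nat.centralBinom (m + 1) = 2 * (2 * m + 1) * Nat.centralBinom m :=
    Nat.succ_mul_centralBinom_succ m
  have h3 : (m + 1) * catalan m = Nat.centralBinom m :=
    succ_mul_catalan_eq_centralBinom m
  have h1' : ((m : ℝ) + 1 + 1) * (catalan (m + 1) : ℝ) = (Nat.centralBinom (m + 1) : ℝ) := by
    exact_mod_cast congrArg (Nat.cast : ℕ → ℝ) h1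
  have h2' : ((m : ℝ) + 1) * (Nat.centralBinom (m + 1) : ℝ) =
      2 * (2 * m + 1) * (Nat.centralBinom m : ℝ) := by
    exact_mod_cast congrArg (Nat.cast : ℕ → ℝ) h2
  have h3' : ((m : ℝ) + 1) * (catalan m : ℝ) = (Nat.centralBinom m : ℝ) := by
    exact_mod_cast congrArg (Nat.cast : ℕ → ℝ) h3
  have hm : ((m : ℝ) + 1) ≠ 0 := by positivity
  have key : ((m : ℝ) + 1) * (((m : ℝ) + 2) * (catalan (m + 1) : ℝ)) =
      ((m : ℝ) + 1) * ((4 * m + 2) * (catalan m : ℝ)) := by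
    nlinarith [h1', h2', h3']
  exact mul_left_cancel₀ hm key

lemma catalan_le_four_pow (n : ℕ) : (catalan n : ℝ) ≤ 4 ^ n := by
  induction n with
  | zero => simp
  | succ m ih =>
    have h := catalan_succ_real m
    have hp : (0 : ℝ) < 4 ^ m := by positivity
    have h4 : (4*(m:ℝ)+2) * (catalan m : ℝ) ≤ (4*(m:ℝ)+2) * 4 ^ m :=
      mul_le_mul_of_nonneg_left ih (by positivity)
    have h5 : ((m:ℝ)+2) * (catalan (m+1) : ℝ) ≤ ((m:ℝ)+2) * 4 ^ (m+1) := by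
      rw [h, pow_succ]
      nlinarith [h4, hp, (Nat.cast_nonneg m : (0:ℝ) ≤ (m:ℝ))]
    exact le_of_mul_le_mul_left h5 (by positivity)

set_option maxHeartbeats 1000000 in
theorem lsmCycleProb_expectation (p q : ℝ) (hpq : p + q = 1)
    (hq0 : 0 < q) (hq : q < 1/2) :
    HasSum (fun n : ℕ => ((n : ℝ) + 1) * lsmCycleProb p q (n + 1))
      ((p - q + p * q) / (p - q)) := by
  have hp0 : 0 < p := by linarith
  have hqp : q < p := by linarith
  have hpmq : (0:ℝ) < p - q := by linarith
  set x : ℝ := p * q with hxdef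
  have hx0 : 0 < x := mul_pos hp0 hq0
  have hx4 : 4 * x < 1 := by
    have h : (0:ℝ) < (p - q)^2 := by positivity
    nlinarith [h]
  set a : ℕ → ℝ := fun m => (catalan m : ℝ) * x ^ m with hadef
  have ha0 : ∀ m, 0 ≤ a m := fun m => by
    simp only [hadef]; positivity
  have haz : a 0 = 1 := by simp [hadef]
  have hale : ∀ m, a m ≤ (4*x) ^ m := by
    intro m
    simp only [hadef, mul_pow]
    exact mul_le_mul_of_nonneg_right (catalan_le_four_pow m) (pow_nonneg hx0.le m)
  have sa : Summable a :=
    Summable.of_nonneg_of_le ha0 hale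
      (summable_geometric_of_lt_one (by positivity) (by linarith))
  have sb : Summable (fun m : ℕ => (m:ℝ) * a m) := by
    have hgeo : Summable (fun m : ℕ => (m:ℝ)^1 * (4*x)^m) :=
      summable_pow_mul_geometric_of_norm_lt_one 1
        (by rw [Real.norm_eq_abs, abs_of_nonneg (by positivity)]; linarith)
    refine Summable.of_nonneg_of_le (fun m => mul_nonneg (Nat.cast_nonneg m) (ha0 m))
      (fun m => ?_) hgeo
    rw [pow_one]
    exact mul_le_mul_of_nonneg_left (hale m) (Nat.cast_nonneg m)
  set f : ℝ := ∑' m, a m with hfdef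
  have hfs : HasSum a f := sa.hasSum
  set T : ℝ := ∑' m : ℕ, (m:ℝ) * a m with hTdef
  have hTs : HasSum (fun m : ℕ => (m:ℝ) * a m) T := sb.hasSum
  -- the antidiagonal convolution of `a` with itself
  have hconv : ∀ m, ∑ kl ∈ antidiagonal m, a kl.1 * a kl.2 = (catalan (m+1) : ℝ) * x ^ m := by
    intro m
    rw [catalan_succ']
    push_cast
    rw [Finset.sum_mul]
    refine Finset.sum_congr rfl fun kl hkl => ?_
    have hm := Finset.HasAntidiagonal.mem_antidiagonal.mp hkl
    simp only [hadef]
    rw [← hm, pow_add]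
    ring
  -- partial sums are bounded by 1/p
  have hpart : ∀ N, ∑ m ∈ range N, a m ≤ 1/p := by
    intro N
    induction N with
    | zero => simp; positivity
    | succ N ih =>
      rw [Finset.sum_range_succ']
      have hstep : ∑ m ∈ range N, a (m+1) ≤ x * (∑ m ∈ range N, a m)^2 := by
        have hterm : ∀ m : ℕ, a (m+1) = x * ∑ kl ∈ antidiagonal m, a kl.1 * a kl.2 := by
          intro m
          rw [hconv]
          simp only [hadef]
          rw [pow_succ]
          ring
        calc ∑ m ∈ range N, a (m+1)
            = x * ∑ m ∈ range N, ∑ kl ∈ antidiagonal m, a kl.1 * a kl.2 := by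
              rw [Finset.mul_sum]; exact Finset.sum_congr rfl fun m _ => hterm m
          _ ≤ x * (∑ m ∈ range N, a m)^2 := by
              refine mul_le_mul_of_nonneg_left ?_ hx0.le
              have hdisj : (↑(range N) : Set ℕ).PairwiseDisjoint antidiagonal := by
                intro i _ j _ hij
                refine Finset.disjoint_left.mpr fun kl hki hkj => ?_
                exact hij ((Finset.HasAntidiagonal.mem_antidiagonal.mp hki).symm.trans
                  (Finset.HasAntidiagonal.mem_antidiagonal.mp hkj))
              rw [← Finset.sum_biUnion hdisj]
              have hsub : (range N).biUnion antidiagonal ⊆ range N ×ˢ range N := by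
                intro kl hkl
                simp only [Finset.mem_biUnion, Finset.mem_range,
                  Finset.HasAntidiagonal.mem_antidiagonal] at hkl
                obtain ⟨m, hm, hklm⟩ := hkl
                simp only [Finset.mem_product, Finset.mem_range]
                omega
              calc ∑ kl ∈ (range N).biUnion antidiagonal, a kl.1 * a kl.2
                  ≤ ∑ kl ∈ range N ×ˢ range N, a kl.1 * a kl.2 :=
                    Finset.sum_le_sum_of_subset_of_nonneg hsub
                      (fun kl _ _ => mul_nonneg (ha0 _) (ha0 _))
                _ = (∑ m ∈ range N, a m)^2 := by
                    rw [Finset.sum_product, sq, Finset.sum_mul]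
                    exact Finset.sum_congr rfl fun i _ => by rw [Finset.mul_sum]
      have h2 : x * (∑ m ∈ range N, a m)^2 ≤ x * (1/p)^2 := by
        refine mul_le_mul_of_nonneg_left ?_ hx0.le
        have hnn : 0 ≤ ∑ m ∈ range N, a m := Finset.sum_nonneg fun m _ => ha0 m
        nlinarith [ih, hnn]
      have h3 : x * (1/p)^2 + 1 = 1/p := by
        rw [hxdef]; field_simp; nlinarith [hpq]
      calc (∑ m ∈ range N, a (m+1)) + a 0 ≤ x * (1/p)^2 + 1 := by
            rw [haz]; exact add_le_add (hstep.trans h2) le_rfl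
        _ = 1/p := h3
  have hfle : f ≤ 1/p := Real.tsum_le_of_sum_range_le ha0 hpart
  -- Cauchy product: x f^2 = f - 1
  have hnorm : Summable (fun m : ℕ => ‖a m‖) := by
    have : (fun m : ℕ => ‖a m‖) = a := funext fun m => Real.norm_of_nonneg (ha0 m)
    rw [this]; exact sa
  have hshift : HasSum (fun m : ℕ => a (m+1)) (f - 1) := by
    rw [hasSum_nat_add_iff 1]
    simpa [haz] using hfs
  have hCsum : HasSum (fun m : ℕ => (catalan (m+1):ℝ) * x ^ m) (x⁻¹ * (f-1)) := by
    have h := hshift.mul_left x⁻¹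
    have heq : (fun m : ℕ => x⁻¹ * a (m+1)) = fun m : ℕ => (catalan (m+1):ℝ) * x ^ m := by
      funext m
      simp only [hadef]
      rw [pow_succ]
      field_simp
    rwa [heq] at h
  have hquad : x * (f * f) = f - 1 := by
    have h1 : f * f = ∑' m, ∑ kl ∈ antidiagonal m, a kl.1 * a kl.2 :=
      tsum_mul_tsum_eq_tsum_sum_antidiagonal_of_summable_norm hnorm hnorm
    have h2 : f * f = ∑' m, (catalan (m+1):ℝ) * x ^ m := by
      rw [h1]; exact tsum_congr hconv
    rw [h2, hCsum.tsum_eq]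
    field_simp
  -- deduce f = 1/p
  have hfval : f = 1/p := by
    have hzero : (p*f - 1)*(q*f - 1) = 0 := by
      linear_combination hquad - f * hpq
    have hqf : q * f < 1 := by
      have h1 : q * f ≤ q * (1/p) := by
        refine mul_le_mul_of_nonneg_left hfle hq0.le
      have h2 : q * (1/p) < 1 := by
        rw [mul_one_div, div_lt_one hp0]; exact hqp
      linarith
    rcases mul_eq_zero.mp hzero with h | h
    · field_simp
      linarith [h]
    · exfalso; linarith [h]
  -- the weighted sum T
  have h1 : HasSum (fun k : ℕ => ((k:ℝ)+1) * a k) (T + f) := by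
    have h := hTs.add hfs
    have heq : (fun k : ℕ => ((k:ℝ)+1) * a k) = fun k : ℕ => (k:ℝ) * a k + a k := by
      funext k; ring
    rwa [heq]
  have h2 : HasSum (fun m : ℕ => ((m:ℝ) + 2) * a (m+1)) (T + f - 1) := by
    have h2' : HasSum (fun m : ℕ => ((↑(m+1):ℝ)+1) * a (m+1)) (T + f - 1) := by
      refine (hasSum_nat_add_iff (f := fun k : ℕ => ((k:ℝ)+1) * a k) 1).mpr ?_
      have hsum : T + f - 1 + ∑ i ∈ range 1, ((i:ℝ)+1) * a i = T + f := by
        simp [haz]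
      rw [hsum]
      exact h1
    have heq : (fun m : ℕ => ((↑(m+1):ℝ)+1) * a (m+1)) =
        fun m : ℕ => ((m:ℝ) + 2) * a (m+1) := by
      funext m; push_cast; ring
    rwa [heq] at h2'
  have h3 : HasSum (fun m : ℕ => ((m:ℝ) + 2) * a (m+1)) (x*(4*T+2*f)) := by
    have h := ((hTs.mul_left 4).add (hfs.mul_left 2)).mul_left x
    have heq : (fun m : ℕ => x * (4 * ((m:ℝ) * a m) + 2 * a m)) =
        fun m : ℕ => ((m:ℝ) + 2) * a (m+1) := by
      funext m
      simp only [hadef]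
      rw [pow_succ]
      linear_combination (-(x ^ m * x)) * catalan_succ_real m
    rwa [heq] at h
  have hkey : T + f - 1 = x*(4*T+2*f) := h2.unique h3
  -- solve for T
  have hT2 : T * (p*(p-q)) = q := by
    have hk : T * (1 - 4*x) = 1 - f + 2*x*f := by linear_combination hkey
    rw [hfval, hxdef] at hk
    have hp' : p ≠ 0 := ne_of_gt hp0
    field_simp at hk
    have hpmq' : p - q ≠ 0 := ne_of_gt hpmq
    nlinarith [hk, hpq, sq_nonneg (p-q)]
  -- final assembly
  have h4 : HasSum (fun m : ℕ => x * ((m:ℝ) * a m + 2 * a m)) (x*(T+2*f)) := by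
    exact (hTs.add (hfs.mul_left 2)).mul_left x
  have hshift2 : HasSum
      (fun m : ℕ => ((↑(m+1):ℝ) + 1) * lsmCycleProb p q ((m+1) + 1)) (x*(T+2*f)) := by
    have heq : (fun m : ℕ => ((↑(m+1):ℝ) + 1) * lsmCycleProb p q ((m+1) + 1)) =
        fun m : ℕ => x * ((m:ℝ) * a m + 2 * a m) := by
      funext m
      have hne : m + 1 + 1 ≠ 1 := by omega
      simp only [lsmCycleProb, if_neg hne, hadef]
      push_cast
      rw [← hxdef, pow_succ]
      ring
    rw [heq]
    exact h4
  have hfinal := (hasSum_nat_add_iff (f := fun n : ℕ => ((n:ℝ) + 1) * lsmCycleProb p q (n + 1)) 1).mp hshift2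
  have hG0 : ∑ i ∈ range 1, ((i:ℝ) + 1) * lsmCycleProb p q (i + 1) = p := by
    simp [lsmCycleProb]
  rw [hG0] at hfinal
  have hval : x*(T+2*f) + p = (p - q + p * q) / (p - q) := by
    rw [hfval, hxdef]
    have hp' : p ≠ 0 := ne_of_gt hp0
    have hpmq' : p - q ≠ 0 := ne_of_gt hpmq
    field_simp
    nlinarith [hT2, hpq]
  rwa [hval] at hfinal
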